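/- Let A be a bialgebra over a commutative ring R admitting a normalized two-sided integral w ∈ A*. Then taking invariants is exact on modules over the convolution algebra A*: if φ : M → N is a surjective homomorphism of left A*-modules, then φ maps M^inv onto N^inv; consequently, for every short exact sequence 0 → M₁ → M₂ → M₃ → 0 of left A*-modules, the induced sequence 0 → M₁^inv → M₂^inv → M₃^inv → 0 is exact. -/
import Mathlib


/-- The convolution product on the dual `A* = Hom_R(A, R)` of a bialgebra `A`:
`(f * g)(a) = Σ f(a₍₁₎) · g(a₍₂₎)`. -/
noncomputable def conv {R A : Type*} [CommRing R] [Ring A] [Bialgebra R A]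
    (f g : Module.Dual R A) : Module.Dual R A :=
  LinearMap.mul' R R ∘ₗ TensorProduct.map f g ∘ₗ Coalgebra.comul

/-- A normalized two-sided integral on a bialgebra `A`: an element `w ∈ A*` with
`f * w = w * f = f(1) • w` for all `f ∈ A*` and `w(1) = 1`. -/
def IsNormalizedIntegral {R A : Type*} [CommRing R] [Ring A] [Bialgebra R A]
    (w : Module.Dual R A) : Prop :=
  (∀ f : Module.Dual R A, conv f w = f 1 • w) ∧
  (∀ f : Module.Dual R A, conv w f = f 1 • w) ∧
  w 1 = 1

/-- A structure of left module over the convolution algebra `A*` on an `R`-module `M`: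
an `R`-bilinear action of `A*` on `M` which is unital (the counit `ε` is the unit of the
convolution algebra) and associative for the convolution product. -/
structure ConvModuleStruct (R A M : Type*) [CommRing R] [Ring A] [Bialgebra R A]
    [AddCommGroup M] [Module R M] where
  smul : Module.Dual R A →ₗ[R] M →ₗ[R] M
  counit_smul : ∀ m : M, smul Coalgebra.counit m = m
  conv_smul : ∀ (f g : Module.Dual R A) (m : M),
    smul (conv f g) m = smul f (smul g m)

/-- The invariants `M^inv` of a module `M` over the convolution algebra `A*`:
those `m` with `f • m = f(1) • m` for all `f ∈ A*`. -/
def ConvModuleStruct.inv {R A M : Type*} [CommRing R] [Ring A] [Bialgebra R A]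
    [AddCommGroup M] [Module R M] (μ : ConvModuleStruct R A M) : Set M :=
  {m : M | ∀ f : Module.Dual R A, μ.smul f m = f 1 • m}

lemma inv_of_integral {R A : Type*} [CommRing R] [Ring A] [Bialgebra R A]
    (w : Module.Dual R A) (hw : IsNormalizedIntegral w)
    {M : Type*} [AddCommGroup M] [Module R M] (μ : ConvModuleStruct R A M) (m : M) :
    μ.smul w m ∈ μ.inv := by
  intro f
  rw [← μ.conv_smul, hw.1 f, map_smul]
  rfl

lemma onto_inv {R A : Type*} [CommRing R] [Ring A] [Bialgebra R A]
    (w : Module.Dual R A) (hw : IsNormalizedIntegral w)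
    {M N : Type*} [AddCommGroup M] [Module R M] [AddCommGroup N] [Module R N]
    (μ : ConvModuleStruct R A M) (ν : ConvModuleStruct R A N)
    (φ : M →ₗ[R] N) (hφ : ∀ (f : Module.Dual R A) (m : M), φ (μ.smul f m) = ν.smul f (φ m))
    (hφsurj : Function.Surjective φ) : ∀ n ∈ ν.inv, ∃ m ∈ μ.inv, φ m = n := by
  intro n hn
  obtain ⟨m, rfl⟩ := hφsurj n
  refine ⟨μ.smul w m, inv_of_integral w hw μ m, ?_⟩
  rw [hφ, hn w, hw.2.2, one_smul]

theorem invariants_exact {R A : Type*} [CommRing R] [Ring A] [Bialgebra R A]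
    (w : Module.Dual R A) (hw : IsNormalizedIntegral w)
    -- a surjective homomorphism of `A*`-modules `φ : M → N`
    {M N : Type*} [AddCommGroup M] [Module R M] [AddCommGroup N] [Module R N]
    (μ : ConvModuleStruct R A M) (ν : ConvModuleStruct R A N)
    (φ : M →ₗ[R] N) (hφ : ∀ (f : Module.Dual R A) (m : M), φ (μ.smul f m) = ν.smul f (φ m))
    (hφsurj : Function.Surjective φ)
    -- a short exact sequence `0 → M₁ → M₂ → M₃ → 0` of `A*`-modules
    {M₁ M₂ M₃ : Type*} [AddCommGroup M₁] [Module R M₁] [AddCommGroup M₂] [Module R M₂]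
    [AddCommGroup M₃] [Module R M₃]
    (μ₁ : ConvModuleStruct R A M₁) (μ₂ : ConvModuleStruct R A M₂)
    (μ₃ : ConvModuleStruct R A M₃)
    (i : M₁ →ₗ[R] M₂) (p : M₂ →ₗ[R] M₃)
    (hi : ∀ (f : Module.Dual R A) (m : M₁), i (μ₁.smul f m) = μ₂.smul f (i m))
    (hp : ∀ (f : Module.Dual R A) (m : M₂), p (μ₂.smul f m) = μ₃.smul f (p m))
    (hiinj : Function.Injective i) (hpsurj : Function.Surjective p)
    (hex : LinearMap.range i = LinearMap.ker p) :
    -- `φ` maps `M^inv` onto `N^inv`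
    (∀ n ∈ ν.inv, ∃ m ∈ μ.inv, φ m = n) ∧
    -- the induced sequence `0 → M₁^inv → M₂^inv → M₃^inv → 0` is exact
    ((∀ m ∈ μ₁.inv, i m ∈ μ₂.inv) ∧
     (∀ m ∈ μ₂.inv, p m ∈ μ₃.inv) ∧
     (∀ m₁ ∈ μ₁.inv, ∀ m₁' ∈ μ₁.inv, i m₁ = i m₁' → m₁ = m₁') ∧
     (∀ m₂ ∈ μ₂.inv, p m₂ = 0 → ∃ m₁ ∈ μ₁.inv, i m₁ = m₂) ∧
     (∀ m₁ ∈ μ₁.inv, p (i m₁) = 0) ∧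
     (∀ m₃ ∈ μ₃.inv, ∃ m₂ ∈ μ₂.inv, p m₂ = m₃)) := by
  constructor
  · exact onto_inv w hw μ ν φ hφ hφsurj
  refine ⟨?_, ?_, ?_, ?_, ?_, ?_⟩
  · intro m hm f
    rw [← hi, hm f, map_smul]
  · intro m hm f
    rw [← hp, hm f, map_smul]
  · intro m₁ _ m₁' _ h
    exact hiinj h
  · intro m₂ hm₂ hpm₂
    have : m₂ ∈ LinearMap.range i := by rw [hex]; exact hpm₂
    obtain ⟨m₁, rfl⟩ := this
    refine ⟨m₁, fun f => hiinj ?_, rfl⟩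
    rw [hi, hm₂ f, map_smul]
  · intro m₁ _
    have : i m₁ ∈ LinearMap.ker p := by rw [← hex]; exact ⟨m₁, rfl⟩
    exact this
  · exact onto_inv w hw μ₂ μ₃ p hp hpsurj
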